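/- Let λ be a partition of n and let μ be a partition of n + j. If μ is not a subpartition of 1^j λ, then the partition 1μ (obtained from μ by adjoining one extra part equal to 1) is a partition of n + j + 1 that is not a subpartition of 1^{j+1} λ. -/
import Mathlib


/-- `Subpartition μ ν` : `μ` is obtained from `ν` by merging (adding together)
groups of parts of `ν`. `P` is the grouping of the parts of `ν`. -/
def Subpartition (μ ν : Multiset ℕ) : Prop :=
  ∃ P : Multiset (Multiset ℕ), (∀ m ∈ P, m ≠ 0) ∧ P.join = ν ∧ P.map Multiset.sum = μ

/-- `1^j λ` : the partition of `n + j` obtained from `λ` by adjoining `j` parts equal to `1`. -/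
def onePow {n : ℕ} (j : ℕ) (lam : Nat.Partition n) : Nat.Partition (n + j) where
  parts := Multiset.replicate j 1 + lam.parts
  parts_pos := by
    intro i hi
    rcases Multiset.mem_add.1 hi with h | h
    · rw [Multiset.eq_of_mem_replicate h]; norm_num
    · exact lam.parts_pos h
  parts_sum := by
    rw [Multiset.sum_add, Multiset.sum_replicate, lam.parts_sum, smul_eq_mul, mul_one]
    omega

lemma sum_one_pos_eq_singleton (m : Multiset ℕ) (hpos : ∀ a ∈ m, 0 < a)
    (hs : m.sum = 1) : m = {1} := by
  have hne : m ≠ 0 := by rintro rfl; simp at hs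
  obtain ⟨a, ha⟩ := Multiset.exists_mem_of_ne_zero hne
  obtain ⟨m', rfl⟩ := Multiset.exists_cons_of_mem ha
  rw [Multiset.sum_cons] at hs
  have ha1 : 0 < a := hpos a (Multiset.mem_cons_self _ _)
  have ha' : a = 1 := by omega
  have hm' : m'.sum = 0 := by omega
  have : m' = 0 := by
    by_contra hne'
    obtain ⟨b, hb⟩ := Multiset.exists_mem_of_ne_zero hne'
    have hb1 : 0 < b := hpos b (Multiset.mem_cons_of_mem hb)
    have := Multiset.single_le_sum (fun x _ => Nat.zero_le x) b hb
    omega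
  subst ha'; rw [this]; rfl

/-- If `μ` is not a subpartition of `1^j λ`, then `1μ` is a partition of `n+j+1`
that is not a subpartition of `1^{j+1} λ`. -/
theorem stmt9 {n : ℕ} (lam : Nat.Partition n) (j : ℕ) (μ : Nat.Partition (n + j))
    (h : ¬ Subpartition μ.parts (onePow j lam).parts) :
    (1 ::ₘ μ.parts).sum = n + j + 1 ∧ (∀ i ∈ (1 ::ₘ μ.parts), 0 < i) ∧
      ¬ Subpartition (1 ::ₘ μ.parts) (onePow (j + 1) lam).parts := by
  refine ⟨by rw [Multiset.sum_cons, μ.parts_sum]; omega, ?_, ?_⟩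
  · intro i hi
    rcases Multiset.mem_cons.1 hi with rfl | hi
    · norm_num
    · exact μ.parts_pos hi
  · rintro ⟨P, hne, hjoin, hmap⟩
    -- find the block summing to 1
    have h1 : (1 : ℕ) ∈ P.map Multiset.sum := by rw [hmap]; exact Multiset.mem_cons_self _ _
    obtain ⟨m, hmP, hm1⟩ := Multiset.mem_map.1 h1
    have hpos : ∀ a ∈ m, 0 < a := by
      intro a ha
      have : a ∈ P.join := Multiset.mem_join.2 ⟨m, hmP, ha⟩
      rw [hjoin] at this
      exact (onePow (j + 1) lam).parts_pos this
    have hm : m = {1} := sum_one_pos_eq_singleton m hpos hm1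
    obtain ⟨P', rfl⟩ := Multiset.exists_cons_of_mem hmP
    apply h
    refine ⟨P', fun x hx => hne x (Multiset.mem_cons_of_mem hx), ?_, ?_⟩
    · have : (m ::ₘ P').join = m + P'.join := Multiset.join_cons _ _
      rw [this, hm] at hjoin
      have hon : (onePow (j + 1) lam).parts = ({1} : Multiset ℕ) + (onePow j lam).parts := by
        show Multiset.replicate (j + 1) 1 + lam.parts
            = {1} + (Multiset.replicate j 1 + lam.parts)
        rw [Multiset.replicate_succ, ← add_assoc, Multiset.singleton_add]
      rw [hon] at hjoin
      exact add_left_cancel hjoin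
    · rw [Multiset.map_cons, hm1] at hmap
      exact (Multiset.cons_inj_right _).1 hmap
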